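/- The following linear relation holds: λ·φ_0 + ∑_{k=1}^{c−1} u(λ)^{k−1} (c−k) b_0 (1 − u(λ)) φ_k = u(λ)^i. -/

import Mathlib

open Set Filter Topology

/-- The generating function `B_i(s) = ∑_{j≥0} b_j s^j + (i-1) b_0 (1-s)`. -/
noncomputable def Bi (b : ℕ → ℝ) (i : ℕ) (s : ℝ) : ℝ :=
  (∑' j : ℕ, b j * s ^ j) + ((i : ℝ) - 1) * b 0 * (1 - s)

private lemma sum_Icc_one' (f : ℕ → ℝ) (n : ℕ) :
    ∑ k ∈ Finset.Icc 1 n, f k = ∑ j ∈ Finset.range n, f (j + 1) := by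
  rw [← Finset.Ico_add_one_right_eq_Icc, Finset.sum_Ico_eq_sum_range]
  simp [Nat.add_comm]

set_option maxHeartbeats 1000000 in
theorem stmt10 (c : ℕ) (hc : 1 ≤ c) (b : ℕ → ℝ)
    (hbnn : ∀ j : ℕ, j ≠ 1 → 0 ≤ b j) (hb0 : 0 < b 0)
    (hbsum : Summable b) (hbzero : (∑' j : ℕ, b j) = 0)
    (hb2 : 0 < ∑' j : ℕ, b (j + 2))
    (lam : ℝ) (hlam : 0 < lam) (i : ℕ) (φ : ℕ → ℝ)
    (hφnn : ∀ j : ℕ, 0 ≤ φ j) (hφsum : Summable φ)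
    (heq0 : -lam * φ 0 + b 0 * φ 1 = -(if i = 0 then (1 : ℝ) else 0))
    (heqmid : ∀ j : ℕ, 1 ≤ j → j ≤ c - 1 →
      (∑ k ∈ Finset.Icc 1 (j - 1), b (j - k + 1) * φ k) +
        (b 1 - ((j : ℝ) - 1) * b 0 - lam) * φ j + ((j : ℝ) + 1) * b 0 * φ (j + 1) =
          -(if i = j then (1 : ℝ) else 0))
    (heqtail : ∀ j : ℕ, c ≤ j →
      (∑ k ∈ Finset.Icc 1 (j - 1), b (j - k + 1) * φ k) +
        (b 1 - ((c : ℝ) - 1) * b 0 - lam) * φ j + (c : ℝ) * b 0 * φ (j + 1) =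
          -(if i = j then (1 : ℝ) else 0))
    (ul : ℝ) (hul : ul ∈ Set.Ioo (0 : ℝ) 1) (hulroot : Bi b c ul = lam * ul) :
    lam * φ 0 +
        (∑ k ∈ Finset.Icc 1 (c - 1),
          ul ^ (k - 1) * ((c : ℝ) - (k : ℝ)) * b 0 * (1 - ul) * φ k) =
      ul ^ i := by
  obtain ⟨hs0, hs1⟩ := hul
  have hsne : ul ≠ 0 := ne_of_gt hs0
  have hpownn : ∀ n : ℕ, (0:ℝ) ≤ ul ^ n := fun n => (pow_pos hs0 n).le
  have hpowle : ∀ n : ℕ, ul ^ n ≤ 1 := fun n => pow_le_one₀ hs0.le hs1.le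
  -- basic summability facts
  have hφs : Summable (fun j : ℕ => φ j * ul ^ j) := by
    refine Summable.of_nonneg_of_le (fun j => mul_nonneg (hφnn j) (hpownn j))
      (fun j => ?_) hφsum
    calc φ j * ul ^ j ≤ φ j * 1 := mul_le_mul_of_nonneg_left (hpowle j) (hφnn j)
      _ = φ j := mul_one _
  have hφs1 : Summable (fun n : ℕ => φ (n + 1) * ul ^ (n + 1)) :=
    (summable_nat_add_iff 1).mpr hφs
  have hbsall : Summable (fun j : ℕ => b j * ul ^ j) := by
    refine Summable.of_norm_bounded hbsum.abs (fun j => ?_)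
    rw [Real.norm_eq_abs, abs_mul, abs_pow, abs_of_nonneg hs0.le]
    calc |b j| * ul ^ j ≤ |b j| * 1 :=
          mul_le_mul_of_nonneg_left (hpowle j) (abs_nonneg _)
      _ = |b j| := mul_one _
  have hbs2 : Summable (fun m : ℕ => b (m + 2) * ul ^ (m + 2)) :=
    (summable_nat_add_iff 2).mpr hbsall
  have hbs2nn : ∀ m : ℕ, 0 ≤ b (m + 2) * ul ^ (m + 2) :=
    fun m => mul_nonneg (hbnn (m + 2) (by omega)) (hpownn _)
  -- main tsum quantities
  set Ψ : ℝ := ∑' n : ℕ, φ (n + 1) * ul ^ (n + 1) with hΨdef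
  set Bt : ℝ := ∑' m : ℕ, b (m + 2) * ul ^ (m + 2) with hBtdef
  have hMsummand : Summable
      (fun n : ℕ => ((min (n + 1) c : ℕ) : ℝ) * φ (n + 1) * ul ^ (n + 1)) := by
    refine Summable.of_nonneg_of_le
      (fun n => mul_nonneg (mul_nonneg (by positivity) (hφnn _)) (hpownn _))
      (fun n => ?_) (hφs1.mul_left (c : ℝ))
    have h1 : ((min (n + 1) c : ℕ) : ℝ) ≤ (c : ℝ) := by exact_mod_cast min_le_right _ _
    have h2 : (0:ℝ) ≤ φ (n + 1) * ul ^ (n + 1) := mul_nonneg (hφnn _) (hpownn _)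
    calc ((min (n + 1) c : ℕ) : ℝ) * φ (n + 1) * ul ^ (n + 1)
        = ((min (n + 1) c : ℕ) : ℝ) * (φ (n + 1) * ul ^ (n + 1)) := by ring
      _ ≤ (c : ℝ) * (φ (n + 1) * ul ^ (n + 1)) := mul_le_mul_of_nonneg_right h1 h2
  set M : ℝ := ∑' n : ℕ, ((min (n + 1) c : ℕ) : ℝ) * φ (n + 1) * ul ^ (n + 1) with hMdef
  -- the uniform equation for j = n+1
  have hE : ∀ n : ℕ,
      (∑ k ∈ Finset.Icc 1 n, b (n + 1 - k + 1) * φ k) +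
        (b 1 - (((min (n + 1) c : ℕ) : ℝ) - 1) * b 0 - lam) * φ (n + 1) +
        ((min (n + 2) c : ℕ) : ℝ) * b 0 * φ (n + 2) =
      -(if i = n + 1 then (1 : ℝ) else 0) := by
    intro n
    by_cases h : n + 2 ≤ c
    · have h1 : min (n + 1) c = n + 1 := by omega
      have h2 : min (n + 2) c = n + 2 := by omega
      have key := heqmid (n + 1) (by omega) (by omega)
      simp only [Nat.add_sub_cancel] at key
      rw [h1, h2]
      push_cast
      push_cast at key
      linear_combination key
    · have h1 : min (n + 1) c = c := by omega
      have h2 : min (n + 2) c = c := by omega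
      have key := heqtail (n + 1) (by omega)
      simp only [Nat.add_sub_cancel] at key
      rw [h1, h2]
      linear_combination key
  -- decomposed equation multiplied by ul^(n+2)
  have hkey : ∀ n : ℕ,
      (ul ^ (n + 2) * ∑ k ∈ Finset.Icc 1 n, b (n + 1 - k + 1) * φ k) +
        (((b 1 + b 0 - lam) * (φ (n + 1) * ul ^ (n + 2)) -
          ((min (n + 1) c : ℕ) : ℝ) * b 0 * (φ (n + 1) * ul ^ (n + 2))) +
        ((min (n + 2) c : ℕ) : ℝ) * b 0 * (φ (n + 2) * ul ^ (n + 2))) =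
      -(if i = n + 1 then (1 : ℝ) else 0) * ul ^ (n + 2) := by
    intro n
    rw [← hE n]
    ring
  -- summability of the pieces
  have S2a : Summable (fun n : ℕ => (b 1 + b 0 - lam) * (φ (n + 1) * ul ^ (n + 2))) := by
    have h : Summable (fun n : ℕ => φ (n + 1) * ul ^ (n + 2)) := by
      refine (hφs1.mul_right ul).congr (fun n => ?_)
      rw [pow_succ]; ring
    exact h.mul_left _
  have S2b : Summable (fun n : ℕ =>
      ((min (n + 1) c : ℕ) : ℝ) * b 0 * (φ (n + 1) * ul ^ (n + 2))) := by
    refine (hMsummand.mul_left (b 0 * ul)).congr (fun n => ?_)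
    rw [pow_succ]; ring
  have S3 : Summable (fun n : ℕ =>
      ((min (n + 2) c : ℕ) : ℝ) * b 0 * (φ (n + 2) * ul ^ (n + 2))) := by
    refine (((summable_nat_add_iff 1).mpr hMsummand).mul_left (b 0)).congr (fun n => ?_)
    have e : n + 1 + 1 = n + 2 := rfl
    rw [e]; ring
  -- the convolution piece
  have hfn : Summable (fun m : ℕ => ‖b (m + 2) * ul ^ (m + 2)‖) := by
    refine hbs2.congr (fun m => ?_)
    rw [Real.norm_eq_abs, abs_of_nonneg (hbs2nn m)]
  have hgn : Summable (fun k : ℕ => ‖φ (k + 1) * ul ^ (k + 1)‖) := by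
    refine hφs1.congr (fun k => ?_)
    rw [Real.norm_eq_abs, abs_of_nonneg (mul_nonneg (hφnn _) (hpownn _))]
  have hA : ∀ n : ℕ,
      (∑ kl ∈ Finset.HasAntidiagonal.antidiagonal n,
        (b (kl.1 + 2) * ul ^ (kl.1 + 2)) * (φ (kl.2 + 1) * ul ^ (kl.2 + 1))) =
      ul ^ (n + 1 + 2) * ∑ k ∈ Finset.Icc 1 (n + 1), b (n + 1 + 1 - k + 1) * φ k := by
    intro n
    calc (∑ kl ∈ Finset.HasAntidiagonal.antidiagonal n,
          (b (kl.1 + 2) * ul ^ (kl.1 + 2)) * (φ (kl.2 + 1) * ul ^ (kl.2 + 1)))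
        = ∑ k ∈ Finset.range (n + 1),
            (b (k + 2) * ul ^ (k + 2)) * (φ (n - k + 1) * ul ^ (n - k + 1)) :=
          Finset.Nat.sum_antidiagonal_eq_sum_range_succ_mk _ n
      _ = ∑ j ∈ Finset.range (n + 1),
            (b ((n + 1 - 1 - j) + 2) * ul ^ ((n + 1 - 1 - j) + 2)) *
              (φ (n - (n + 1 - 1 - j) + 1) * ul ^ (n - (n + 1 - 1 - j) + 1)) :=
          (Finset.sum_range_reflect _ _).symm
      _ = ∑ j ∈ Finset.range (n + 1),
            ul ^ (n + 1 + 2) * (b (n + 1 + 1 - (j + 1) + 1) * φ (j + 1)) := by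
          refine Finset.sum_congr rfl (fun j hj => ?_)
          have hjn : j ≤ n := by
            have := Finset.mem_range.mp hj; omega
          have e1 : n + 1 - 1 - j = n - j := by omega
          have e2 : n - (n - j) + 1 = j + 1 := by omega
          have e4 : n + 1 + 1 - (j + 1) + 1 = n - j + 2 := by omega
          have e5 : ul ^ (n - j + 2) * ul ^ (j + 1) = ul ^ (n + 1 + 2) := by
            rw [← pow_add]; congr 1; omega
          rw [e1, e2, e4, ← e5]
          ring
      _ = ul ^ (n + 1 + 2) * ∑ k ∈ Finset.Icc 1 (n + 1), b (n + 1 + 1 - k + 1) * φ k := by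
          rw [sum_Icc_one' (fun k => b (n + 1 + 1 - k + 1) * φ k), Finset.mul_sum]
  have hconv : Summable (fun n : ℕ =>
      ∑ kl ∈ Finset.HasAntidiagonal.antidiagonal n,
        (b (kl.1 + 2) * ul ^ (kl.1 + 2)) * (φ (kl.2 + 1) * ul ^ (kl.2 + 1))) :=
    (summable_norm_sum_mul_antidiagonal_of_summable_norm hfn hgn).of_norm
  have S1' : Summable (fun n : ℕ =>
      ul ^ (n + 1 + 2) * ∑ k ∈ Finset.Icc 1 (n + 1), b (n + 1 + 1 - k + 1) * φ k) :=
    hconv.congr hA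
  have S1 : Summable (fun n : ℕ =>
      ul ^ (n + 2) * ∑ k ∈ Finset.Icc 1 n, b (n + 1 - k + 1) * φ k) :=
    (summable_nat_add_iff (f := fun n : ℕ =>
      ul ^ (n + 2) * ∑ k ∈ Finset.Icc 1 n, b (n + 1 - k + 1) * φ k) 1).mp S1'
  -- tsum of the convolution piece
  have T1 : (∑' n : ℕ, ul ^ (n + 2) * ∑ k ∈ Finset.Icc 1 n, b (n + 1 - k + 1) * φ k)
      = Bt * Ψ := by
    have h0 : (∑' n : ℕ, ul ^ (n + 2) * ∑ k ∈ Finset.Icc 1 n, b (n + 1 - k + 1) * φ k) =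
        (ul ^ (0 + 2) * ∑ k ∈ Finset.Icc 1 0, b (0 + 1 - k + 1) * φ k) +
        ∑' n : ℕ, ul ^ (n + 1 + 2) * ∑ k ∈ Finset.Icc 1 (n + 1), b (n + 1 + 1 - k + 1) * φ k :=
      Summable.tsum_eq_zero_add S1
    rw [h0]
    have h1 : (∑ k ∈ Finset.Icc 1 0, b (0 + 1 - k + 1) * φ k) = 0 := by simp
    rw [h1, mul_zero, zero_add]
    exact ((tsum_mul_tsum_eq_tsum_sum_antidiagonal_of_summable_norm hfn hgn).trans
      (tsum_congr hA)).symm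
  -- tsums of the other pieces
  have T2a : (∑' n : ℕ, (b 1 + b 0 - lam) * (φ (n + 1) * ul ^ (n + 2)))
      = (b 1 + b 0 - lam) * (ul * Ψ) := by
    have h : ∀ n : ℕ, (b 1 + b 0 - lam) * (φ (n + 1) * ul ^ (n + 2)) =
        ((b 1 + b 0 - lam) * ul) * (φ (n + 1) * ul ^ (n + 1)) := by
      intro n; rw [pow_succ]; ring
    rw [tsum_congr h, tsum_mul_left, hΨdef]; ring
  have T2b : (∑' n : ℕ, ((min (n + 1) c : ℕ) : ℝ) * b 0 * (φ (n + 1) * ul ^ (n + 2)))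
      = (b 0 * ul) * M := by
    have h : ∀ n : ℕ, ((min (n + 1) c : ℕ) : ℝ) * b 0 * (φ (n + 1) * ul ^ (n + 2)) =
        (b 0 * ul) * (((min (n + 1) c : ℕ) : ℝ) * φ (n + 1) * ul ^ (n + 1)) := by
      intro n; rw [pow_succ]; ring
    rw [tsum_congr h, tsum_mul_left, hMdef]
  have T3 : (∑' n : ℕ, ((min (n + 2) c : ℕ) : ℝ) * b 0 * (φ (n + 2) * ul ^ (n + 2)))
      = b 0 * (M - φ 1 * ul) := by
    have hM0 : M = ((min 1 c : ℕ) : ℝ) * φ 1 * ul ^ 1 +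
        ∑' n : ℕ, ((min (n + 1 + 1) c : ℕ) : ℝ) * φ (n + 1 + 1) * ul ^ (n + 1 + 1) :=
      Summable.tsum_eq_zero_add hMsummand
    have h1c : min 1 c = 1 := by omega
    rw [h1c] at hM0
    have h : ∀ n : ℕ, ((min (n + 2) c : ℕ) : ℝ) * b 0 * (φ (n + 2) * ul ^ (n + 2)) =
        b 0 * (((min (n + 1 + 1) c : ℕ) : ℝ) * φ (n + 1 + 1) * ul ^ (n + 1 + 1)) := by
      intro n
      have e : n + 1 + 1 = n + 2 := rfl
      rw [e]; ring
    rw [tsum_congr h, tsum_mul_left]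
    have h2 : (∑' n : ℕ, ((min (n + 1 + 1) c : ℕ) : ℝ) * φ (n + 1 + 1) * ul ^ (n + 1 + 1))
        = M - φ 1 * ul := by
      rw [hM0]; push_cast; ring
    rw [h2]
  -- M = c·Ψ − Dr
  have hMD : (c : ℝ) * Ψ - M = ∑ n ∈ Finset.range (c - 1),
      ((c : ℝ) - ((n : ℝ) + 1)) * (φ (n + 1) * ul ^ (n + 1)) := by
    have hcΨ : (c : ℝ) * Ψ = ∑' n : ℕ, (c : ℝ) * (φ (n + 1) * ul ^ (n + 1)) := by
      rw [hΨdef, tsum_mul_left]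
    rw [hcΨ, hMdef, ← Summable.tsum_sub (hφs1.mul_left _) hMsummand]
    rw [tsum_eq_sum (s := Finset.range (c - 1)) ?_]
    · refine Finset.sum_congr rfl (fun n hn => ?_)
      have hnc : min (n + 1) c = n + 1 := by
        have := Finset.mem_range.mp hn; omega
      rw [hnc]; push_cast; ring
    · intro n hn
      have hnc : min (n + 1) c = c := by
        have : ¬ (n < c - 1) := fun h => hn (Finset.mem_range.mpr h)
        omega
      rw [hnc]; ring
  -- splitting the root equation
  have e1 : (∑' j : ℕ, b j * ul ^ j) = b 0 * ul ^ 0 + ∑' n : ℕ, b (n + 1) * ul ^ (n + 1) :=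
    Summable.tsum_eq_zero_add hbsall
  have e2 : (∑' n : ℕ, b (n + 1) * ul ^ (n + 1)) =
      b 1 * ul ^ 1 + ∑' n : ℕ, b (n + 1 + 1) * ul ^ (n + 1 + 1) :=
    Summable.tsum_eq_zero_add ((summable_nat_add_iff 1).mpr hbsall)
  have e3 : (∑' n : ℕ, b (n + 1 + 1) * ul ^ (n + 1 + 1)) = Bt := by
    rw [hBtdef]
  have hBsplit : (∑' j : ℕ, b j * ul ^ j) = b 0 + b 1 * ul + Bt := by
    rw [e1, e2, e3]; ring
  have hroot : Bt + (b 1 + b 0) * ul + (c : ℝ) * b 0 * (1 - ul) = lam * ul := by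
    have h := hulroot
    simp only [Bi] at h
    rw [hBsplit] at h
    linear_combination h
  -- tsum of the right-hand sides
  have SR : Summable (fun n : ℕ => -(if i = n + 1 then (1 : ℝ) else 0) * ul ^ (n + 2)) := by
    refine ((S1.add (S2a.sub S2b)).add S3).congr (fun n => ?_)
    rw [← hkey n]; ring
  have TR : ul * (-(if i = 0 then (1 : ℝ) else 0)) +
      (∑' n : ℕ, -(if i = n + 1 then (1 : ℝ) else 0) * ul ^ (n + 2)) = -ul ^ (i + 1) := by
    by_cases hi : i = 0
    · subst hi
      have h : ∀ n : ℕ, -(if (0 : ℕ) = n + 1 then (1 : ℝ) else 0) * ul ^ (n + 2) = 0 := by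
        intro n; simp
      rw [tsum_congr h, tsum_zero]
      norm_num
    · obtain ⟨m, rfl⟩ : ∃ m, i = m + 1 := ⟨i - 1, by omega⟩
      have hz : ∀ n : ℕ, n ≠ m → -(if m + 1 = n + 1 then (1 : ℝ) else 0) * ul ^ (n + 2) = 0 := by
        intro n hn
        rw [if_neg (by omega : ¬ (m + 1 = n + 1))]
        ring
      rw [tsum_eq_single m hz, if_pos rfl, if_neg (by omega : ¬ (m + 1 = 0))]
      ring
  -- total tsum of the left-hand sides
  have TL : (∑' n : ℕ,
      ((ul ^ (n + 2) * ∑ k ∈ Finset.Icc 1 n, b (n + 1 - k + 1) * φ k) +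
        (((b 1 + b 0 - lam) * (φ (n + 1) * ul ^ (n + 2)) -
          ((min (n + 1) c : ℕ) : ℝ) * b 0 * (φ (n + 1) * ul ^ (n + 2))) +
        ((min (n + 2) c : ℕ) : ℝ) * b 0 * (φ (n + 2) * ul ^ (n + 2))))) =
      Bt * Ψ + ((b 1 + b 0 - lam) * (ul * Ψ) - (b 0 * ul) * M) + b 0 * (M - φ 1 * ul) := by
    rw [Summable.tsum_add S1 ((S2a.sub S2b).add S3), Summable.tsum_add (S2a.sub S2b) S3,
      Summable.tsum_sub S2a S2b, T1, T2a, T2b, T3]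
    ring
  have hmain : Bt * Ψ + ((b 1 + b 0 - lam) * (ul * Ψ) - (b 0 * ul) * M) + b 0 * (M - φ 1 * ul)
      = ∑' n : ℕ, -(if i = n + 1 then (1 : ℝ) else 0) * ul ^ (n + 2) := by
    rw [← TL]
    exact tsum_congr hkey
  -- relate the finite correction sum to the goal's sum
  set T : ℝ := ∑ k ∈ Finset.Icc 1 (c - 1),
      ul ^ (k - 1) * ((c : ℝ) - (k : ℝ)) * b 0 * (1 - ul) * φ k with hTdef
  have hD : b 0 * (1 - ul) * (∑ n ∈ Finset.range (c - 1),
      ((c : ℝ) - ((n : ℝ) + 1)) * (φ (n + 1) * ul ^ (n + 1))) = ul * T := by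
    rw [hTdef, sum_Icc_one' (fun k => ul ^ (k - 1) * ((c : ℝ) - (k : ℝ)) * b 0 * (1 - ul) * φ k),
      Finset.mul_sum, Finset.mul_sum]
    refine Finset.sum_congr rfl (fun n hn => ?_)
    have e : n + 1 - 1 = n := by omega
    rw [e]
    push_cast
    rw [pow_succ]
    ring
  -- assemble
  have goal' : ul * (lam * φ 0 + T) = ul * ul ^ i := by
    linear_combination (-1 : ℝ) * hmain - TR - ul * heq0 + Ψ * hroot
      - (b 0 * (1 - ul)) * hMD - hD
  exact mul_left_cancel₀ hsne goal'
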